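/- arXiv:1206.5031 — 3 statements merged into one kernel-verified Lean document; each statement's English description precedes it below -/
import Mathlib

section
/- For all real t ≥ 0, ∑_{n=⌈√t⌉+1}^∞ sin(t/n^2) ≥ t/(⌈√t⌉+1) − (1/30) · t^3/⌈√t⌉^5 (with the convention that for t = 0 the sum starts at n = 1 and both sides are 0). -/
open Real

/-- Telescoping sum of a nonincreasing sequence tending to 0. -/
lemma hasSum_telescope' (h : ℕ → ℝ) (hmono : ∀ k, h (k + 1) ≤ h k)
    (hlim : Filter.Tendsto h Filter.atTop (nhds 0)) :
    HasSum (fun k => h k - h (k + 1)) (h 0) := by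
  rw [hasSum_iff_tendsto_nat_of_nonneg (fun k => sub_nonneg.2 (hmono k))]
  have heq : ∀ K, ∑ k ∈ Finset.range K, (h k - h (k + 1)) = h 0 - h K := by
    intro K; exact Finset.sum_range_sub' h K
  simp only [heq]
  have := (tendsto_const_nhds (x := h 0)).sub hlim
  simpa using this

/-- `sin x ≥ x - x³/6` for `x ≥ 0`. -/
lemma sin_ge_sub_cube {x : ℝ} (hx : 0 ≤ x) : x - x ^ 3 / 6 ≤ Real.sin x := by
  set F : ℝ → ℝ := fun y => Real.sin y - y + y ^ 3 / 6 with hF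
  have hderiv : ∀ y : ℝ, HasDerivAt F (Real.cos y - 1 + y ^ 2 / 2) y := by
    intro y
    have h1 : HasDerivAt (fun y : ℝ => y ^ 3 / 6) (y ^ 2 / 2) y := by
      have := (hasDerivAt_pow 3 y).div_const 6
      exact this.congr_deriv (by ring)
    have := ((Real.hasDerivAt_sin y).sub (hasDerivAt_id y)).add h1
    exact this
  have hmono : Monotone F := by
    apply monotone_of_deriv_nonneg
    · exact fun y => (hderiv y).differentiableAt
    · intro y
      rw [(hderiv y).deriv]
      have := Real.one_sub_sq_div_two_le_cos (x := y)
      linarith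
  have h0 : F 0 = 0 := by simp [hF]
  have := hmono hx
  rw [h0] at this
  simp only [hF] at this
  linarith

/-- For `t ≥ 0`, with `N = ⌈√t⌉`,
`∑_{n=N+1}^∞ sin(t/n²) ≥ t/(N+1) − (1/30)·t³/N⁵`. -/
theorem stmt_4 (t : ℝ) (ht : 0 ≤ t) :
    (∑' n : ℕ, Real.sin (t / ((⌈Real.sqrt t⌉₊ + 1 + n : ℕ) : ℝ) ^ 2))
      ≥ t / ((⌈Real.sqrt t⌉₊ : ℝ) + 1)
        - (1 / 30) * t ^ 3 / ((⌈Real.sqrt t⌉₊ : ℝ)) ^ 5 := by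
  rcases eq_or_lt_of_le ht with rfl | htpos
  · simp
  set N := ⌈Real.sqrt t⌉₊ with hN
  have hN1 : 1 ≤ N := by
    rw [hN]
    exact Nat.one_le_ceil_iff.2 (Real.sqrt_pos.2 htpos)
  have hNR : (1 : ℝ) ≤ (N : ℝ) := by exact_mod_cast hN1
  have hsqrt : Real.sqrt t ≤ (N : ℝ) := Nat.le_ceil _
  have htN : t ≤ (N : ℝ) ^ 2 := by
    nlinarith [Real.sq_sqrt ht, Real.sqrt_nonneg t]
  -- notation for the n-th denominator
  have hcast : ∀ k : ℕ, ((N + 1 + k : ℕ) : ℝ) = (N : ℝ) + 1 + k := by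
    intro k; push_cast; ring
  set m : ℕ → ℝ := fun k => (N : ℝ) + 1 + k with hm
  have hmpos : ∀ k, (0 : ℝ) < m k := by
    intro k
    have : (0 : ℝ) ≤ (k : ℝ) := Nat.cast_nonneg k
    simp only [hm]; linarith
  have hm2 : ∀ k, (2 : ℝ) ≤ m k := by
    intro k
    have : (0 : ℝ) ≤ (k : ℝ) := Nat.cast_nonneg k
    simp only [hm]; linarith
  -- the summands, with x_k = t / m k ^ 2
  set x : ℕ → ℝ := fun k => t / m k ^ 2 with hx
  have hxpos : ∀ k, 0 < x k := fun k => div_pos htpos (pow_pos (hmpos k) 2)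
  have hxle1 : ∀ k, x k ≤ 1 := by
    intro k
    rw [hx, div_le_one (pow_pos (hmpos k) 2)]
    have h1 : (N : ℝ) ^ 2 ≤ m k ^ 2 := by
      apply pow_le_pow_left₀ (by linarith)
      simp only [hm]
      have : (0 : ℝ) ≤ (k : ℝ) := Nat.cast_nonneg k
      linarith
    linarith
  -- summability of 1 / m k ^ p for p ≥ 2
  have hsummable_pow : ∀ p : ℕ, 1 < p → Summable (fun k => 1 / m k ^ p) := by
    intro p hp
    have hbase : Summable (fun n : ℕ => 1 / (n : ℝ) ^ p) :=
      Real.summable_one_div_nat_pow.2 hp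
    have := (summable_nat_add_iff (f := fun n : ℕ => 1 / (n : ℝ) ^ p) (N + 1)).2 hbase
    apply this.congr
    intro k
    have : ((k + (N + 1) : ℕ) : ℝ) = m k := by simp only [hm]; push_cast; ring
    rw [this]
  have hsum_a : Summable (fun k => 1 / m k ^ 2) := hsummable_pow 2 (by norm_num)
  have hsum_b : Summable (fun k => 1 / m k ^ 6) := hsummable_pow 6 (by norm_num)
  -- lower bound for ∑ 1/m k ^ 2 by telescoping
  have htel_a : HasSum (fun k : ℕ => 1 / ((N : ℝ) + 1 + k) - 1 / ((N : ℝ) + 1 + (k + 1)))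
      (1 / ((N : ℝ) + 1)) := by
    have := hasSum_telescope' (fun k => 1 / ((N : ℝ) + 1 + k))
      (fun k => by
        apply one_div_le_one_div_of_le
        · have : (0 : ℝ) ≤ (k : ℝ) := Nat.cast_nonneg k; linarith
        · push_cast; linarith)
      (by
        have h1 : Filter.Tendsto (fun k : ℕ => (N : ℝ) + 1 + k) Filter.atTop Filter.atTop := by
          apply Filter.tendsto_atTop_add_const_left
          exact tendsto_natCast_atTop_atTop
        simpa [Pi.inv_def] using h1.inv_tendsto_atTop)
    simpa using this
  have hbound_a : 1 / ((N : ℝ) + 1) ≤ ∑' k, 1 / m k ^ 2 := by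
    rw [← htel_a.tsum_eq]
    apply Summable.tsum_le_tsum _ htel_a.summable hsum_a
    intro k
    have hu : (0 : ℝ) < m k := hmpos k
    have hu1 : (0 : ℝ) < m k + 1 := by linarith
    have heq : 1 / ((N : ℝ) + 1 + k) - 1 / ((N : ℝ) + 1 + (k + 1)) = 1 / (m k * (m k + 1)) := by
      simp only [hm]
      push_cast
      rw [div_sub_div _ _ (by linarith [hmpos k]) (by simp only [hm] at hu1 ⊢; linarith)]
      congr 1
      · ring
      · ring
    rw [heq, pow_two]
    apply one_div_le_one_div_of_le (by positivity)
    nlinarith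
  -- upper bound for ∑ 1/m k ^ 6 by telescoping
  have htel_b : HasSum (fun k : ℕ => (1 / 5) / ((N : ℝ) + k) ^ 5 - (1 / 5) / ((N : ℝ) + (k + 1)) ^ 5)
      ((1 / 5) / (N : ℝ) ^ 5) := by
    have := hasSum_telescope' (fun k => (1 / 5) / ((N : ℝ) + k) ^ 5)
      (fun k => by
        have hk : (0 : ℝ) ≤ (k : ℝ) := Nat.cast_nonneg k
        apply div_le_div_of_nonneg_left (by norm_num) (by positivity)
        apply pow_le_pow_left₀ (by linarith)
        push_cast; linarith)
      (by
        have hb : Filter.Tendsto (fun k : ℕ => (N : ℝ) + k) Filter.atTop Filter.atTop := by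
          apply Filter.tendsto_atTop_add_const_left
          exact tendsto_natCast_atTop_atTop
        have h1 : Filter.Tendsto (fun k : ℕ => ((N : ℝ) + k) ^ 5) Filter.atTop Filter.atTop :=
          (Filter.tendsto_pow_atTop (by norm_num : (5 : ℕ) ≠ 0)).comp hb
        have := h1.inv_tendsto_atTop
        have h2 : Filter.Tendsto (fun k : ℕ => (1 / 5 : ℝ) * (((N : ℝ) + k) ^ 5)⁻¹)
            Filter.atTop (nhds ((1 / 5) * 0)) := this.const_mul _
        simpa [div_eq_mul_inv] using h2)
    simpa using this
  have hbound_b : ∑' k, 1 / m k ^ 6 ≤ (1 / 5) / (N : ℝ) ^ 5 := by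
    rw [← htel_b.tsum_eq]
    apply Summable.tsum_le_tsum _ hsum_b htel_b.summable
    intro k
    set v : ℝ := (N : ℝ) + k with hv
    have hv1 : (1 : ℝ) ≤ v := by
      have : (0 : ℝ) ≤ (k : ℝ) := Nat.cast_nonneg k
      simp only [hv]; linarith
    have hvpos : (0 : ℝ) < v := by linarith
    have hv1pos : (0 : ℝ) < v + 1 := by linarith
    have hmk : m k = v + 1 := by simp only [hm, hv]; ring
    have hnk1 : (N : ℝ) + (k + 1) = v + 1 := by simp only [hv]; ring
    rw [hmk, hnk1]
    -- goal: 1/(v+1)^6 ≤ (1/5)/v^5 - (1/5)/(v+1)^5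
    have key : 5 * v ^ 5 ≤ ((v + 1) ^ 5 - v ^ 5) * (v + 1) := by
      have hexp : ((v + 1) ^ 5 - v ^ 5) * (v + 1)
          = 5 * v ^ 5 + 15 * v ^ 4 + 20 * v ^ 3 + 15 * v ^ 2 + 6 * v + 1 := by ring
      nlinarith [pow_nonneg hvpos.le 4, pow_nonneg hvpos.le 3, pow_nonneg hvpos.le 2]
    have hrw : (1 / 5 : ℝ) / v ^ 5 - (1 / 5) / (v + 1) ^ 5
        = ((v + 1) ^ 5 - v ^ 5) / (5 * (v ^ 5 * (v + 1) ^ 5)) := by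
      field_simp
    rw [hrw, div_le_div_iff₀ (by positivity) (by positivity)]
    calc 1 * (5 * (v ^ 5 * (v + 1) ^ 5)) = 5 * v ^ 5 * (v + 1) ^ 5 := by ring
      _ ≤ ((v + 1) ^ 5 - v ^ 5) * (v + 1) * (v + 1) ^ 5 :=
          mul_le_mul_of_nonneg_right key (by positivity)
      _ = ((v + 1) ^ 5 - v ^ 5) * (v + 1) ^ 6 := by ring
  -- the lower-bound sequence
  set g : ℕ → ℝ := fun k => t * (1 / m k ^ 2) - t ^ 3 / 6 * (1 / m k ^ 6) with hg
  have hsum_g : Summable g := (hsum_a.mul_left t).sub (hsum_b.mul_left (t ^ 3 / 6))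
  have hgle : ∀ k, g k ≤ Real.sin (x k) := by
    intro k
    have h1 := _root_.sin_ge_sub_cube (hxpos k).le
    have h2 : x k - x k ^ 3 / 6 = g k := by
      simp only [hx, hg, div_pow, ← pow_mul]
      ring
    rw [← h2]
    exact h1
  have hsum_f : Summable (fun k => Real.sin (x k)) := by
    apply Summable.of_nonneg_of_le _ _ (hsum_a.mul_left t)
    · intro k
      apply Real.sin_nonneg_of_nonneg_of_le_pi (hxpos k).le
      linarith [hxle1 k, Real.pi_gt_three]
    · intro k
      have := Real.sin_lt (hxpos k)
      simp only [hx] at this ⊢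
      rw [mul_one_div]
      linarith
  -- main chain
  have hmain : ∑' k, Real.sin (x k) ≥ t / ((N : ℝ) + 1) - t ^ 3 / (30 * (N : ℝ) ^ 5) := by
    have step1 : ∑' k, g k ≤ ∑' k, Real.sin (x k) := Summable.tsum_le_tsum hgle hsum_g hsum_f
    have step2 : ∑' k, g k = t * (∑' k, 1 / m k ^ 2) - t ^ 3 / 6 * (∑' k, 1 / m k ^ 6) := by
      rw [hg, Summable.tsum_sub (hsum_a.mul_left t) (hsum_b.mul_left (t ^ 3 / 6)),
        tsum_mul_left, tsum_mul_left]
    have h3 : t * (1 / ((N : ℝ) + 1)) ≤ t * (∑' k, 1 / m k ^ 2) :=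
      mul_le_mul_of_nonneg_left hbound_a ht
    have h4 : t ^ 3 / 6 * (∑' k, 1 / m k ^ 6) ≤ t ^ 3 / 6 * ((1 / 5) / (N : ℝ) ^ 5) :=
      mul_le_mul_of_nonneg_left hbound_b (by positivity)
    have h5 : t * (1 / ((N : ℝ) + 1)) = t / ((N : ℝ) + 1) := by ring
    have h6 : t ^ 3 / 6 * ((1 / 5) / (N : ℝ) ^ 5) = t ^ 3 / (30 * (N : ℝ) ^ 5) := by ring
    linarith
  have hfinal : (∑' n : ℕ, Real.sin (t / ((N + 1 + n : ℕ) : ℝ) ^ 2)) = ∑' k, Real.sin (x k) := by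
    congr 1
    funext k
    rw [hcast k]
  rw [hfinal]
  have hrhs : (1 / 30 : ℝ) * t ^ 3 / (N : ℝ) ^ 5 = t ^ 3 / (30 * (N : ℝ) ^ 5) := by ring
  rw [hrhs]
  exact hmain
end

section
/- For p > 1, the function t ↦ ΔS_p(t) := ∑_{n=1}^∞ sin(t/n^p) − α_p t^{1/p} (for t > 0) does not tend to 0 as t → ∞, where α_p = Γ(1−1/p) sin(π/(2p)). -/
open Real Filter MeasureTheory intervalIntegral

lemma min_le_rpow {a θ : ℝ} (ha : 0 ≤ a) (h0 : 0 < θ) (h1 : θ ≤ 1) :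
    min 1 a ≤ a ^ θ := by
  rcases le_or_gt a 1 with h | h
  · rcases eq_or_lt_of_le ha with h' | h'
    · simp [← h', Real.zero_rpow h0.ne']
    · calc min 1 a ≤ a := min_le_right _ _
        _ = a ^ (1:ℝ) := (Real.rpow_one a).symm
        _ ≤ a ^ θ := Real.rpow_le_rpow_of_exponent_ge h' h h1
  · calc min 1 a ≤ 1 := min_le_left _ _
      _ ≤ a ^ θ := Real.one_le_rpow h.le h0.le

lemma summable_shift (q : ℝ) (hq : 1 < q) :
    Summable (fun n : ℕ => ((n : ℝ) + 1) ^ (-q)) := by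
  have h := (Real.summable_nat_rpow_inv (p := q)).2 hq
  have h2 : Summable (fun n : ℕ => (((n + 1 : ℕ) : ℝ) ^ q)⁻¹) :=
    (summable_nat_add_iff 1).2 h
  refine h2.congr fun n => ?_
  push_cast
  rw [← Real.rpow_neg (by positivity)]

lemma int_cos_mul (c T : ℝ) (hc : c ≠ 0) :
    ∫ t in (0:ℝ)..T, Real.cos (c * t) = Real.sin (c * T) / c := by
  rw [integral_comp_mul_left (a := 0) (b := T) (c := c) Real.cos hc, integral_cos]
  simp [div_eq_inv_mul]

lemma int_sin_mul (ω T : ℝ) (h1 : ω < 1) (h0 : 0 < ω) :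
    ∫ t in (0:ℝ)..T, Real.sin (ω * t) * Real.sin t
      = Real.sin ((1 - ω) * T) / (2 * (1 - ω)) - Real.sin ((1 + ω) * T) / (2 * (1 + ω)) := by
  have key : ∀ t : ℝ, Real.sin (ω * t) * Real.sin t
      = (Real.cos ((1 - ω) * t) - Real.cos ((1 + ω) * t)) / 2 := by
    intro t
    rw [Real.cos_sub_cos,
        show ((1 - ω) * t + (1 + ω) * t) / 2 = t by ring,
        show ((1 - ω) * t - (1 + ω) * t) / 2 = -(ω * t) by ring,
        Real.sin_neg]
    ring
  have hA : (1 - ω) ≠ 0 := by linarith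
  have hB : (1 + ω) ≠ 0 := by linarith
  calc ∫ t in (0:ℝ)..T, Real.sin (ω * t) * Real.sin t
      = ∫ t in (0:ℝ)..T, ((Real.cos ((1 - ω) * t) - Real.cos ((1 + ω) * t)) / 2) := by
        simp_rw [key]
    _ = ((∫ t in (0:ℝ)..T, Real.cos ((1 - ω) * t)) - ∫ t in (0:ℝ)..T, Real.cos ((1 + ω) * t)) / 2 := by
        rw [intervalIntegral.integral_div (μ := volume), intervalIntegral.integral_sub] <;>
        · apply Continuous.intervalIntegrable; continuity
    _ = _ := by
        rw [int_cos_mul _ _ hA, int_cos_mul _ _ hB]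
        field_simp

lemma abs_sin_le_one' (x : ℝ) : |Real.sin x| ≤ 1 :=
  abs_le.mpr ⟨Real.neg_one_le_sin x, Real.sin_le_one x⟩

lemma int_sin_mul_bound (ω T : ℝ) (h0 : 0 < ω) (h2 : ω ≤ 1/2) (hT : 0 ≤ T) :
    |∫ t in (0:ℝ)..T, Real.sin (ω * t) * Real.sin t| ≤ 4 * min 1 (ω * (1 + T)) := by
  have h1 : ω < 1 := lt_of_le_of_lt h2 (by norm_num)
  rw [int_sin_mul ω T h1 h0]
  have e1 : (1 - ω) * T = T - ω * T := by ring
  have e2 : (1 + ω) * T = T + ω * T := by ring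
  rw [e1, e2, Real.sin_sub, Real.sin_add]
  have hA : (0:ℝ) < 1 - ω := by linarith
  have hB : (0:ℝ) < 1 + ω := by linarith
  have key : (Real.sin T * Real.cos (ω*T) - Real.cos T * Real.sin (ω*T)) / (2 * (1 - ω))
      - (Real.sin T * Real.cos (ω*T) + Real.cos T * Real.sin (ω*T)) / (2 * (1 + ω))
      = (Real.sin T * Real.cos (ω*T) * ω - Real.cos T * Real.sin (ω*T)) / ((1-ω)*(1+ω)) := by
    field_simp
    ring
  rw [key]
  have hD : (1:ℝ)/2 ≤ (1-ω)*(1+ω) := by nlinarith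
  have hm : 0 ≤ min 1 (ω * (1 + T)) := le_min (by norm_num) (by positivity)
  have hnum : |Real.sin T * Real.cos (ω*T) * ω - Real.cos T * Real.sin (ω*T)|
      ≤ 2 * min 1 (ω * (1 + T)) := by
    have b1 : |Real.sin T * Real.cos (ω*T) * ω| ≤ min 1 (ω * (1+T)) := by
      rw [abs_mul, abs_mul]
      have : |Real.sin T| * |Real.cos (ω*T)| ≤ 1 := by
        calc |Real.sin T| * |Real.cos (ω*T)| ≤ 1 * 1 := by
              apply mul_le_mul (abs_sin_le_one' T)
                (abs_le.mpr ⟨Real.neg_one_le_cos _, Real.cos_le_one _⟩) (abs_nonneg _) zero_le_one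
          _ = 1 := by norm_num
      have hω' : |ω| = ω := abs_of_pos h0
      rw [hω']
      apply le_min
      · nlinarith
      · nlinarith [abs_nonneg (Real.sin T), abs_nonneg (Real.cos (ω*T))]
    have b2 : |Real.cos T * Real.sin (ω*T)| ≤ min 1 (ω * (1+T)) := by
      rw [abs_mul]
      have hc : |Real.cos T| ≤ 1 := abs_le.mpr ⟨Real.neg_one_le_cos _, Real.cos_le_one _⟩
      have hs1 : |Real.sin (ω*T)| ≤ 1 := abs_sin_le_one' _
      have hs2 : |Real.sin (ω*T)| ≤ ω * (1+T) := by
        calc |Real.sin (ω*T)| ≤ |ω*T| := Real.abs_sin_le_abs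
          _ = ω * T := by rw [abs_of_nonneg (by positivity)]
          _ ≤ ω * (1+T) := by nlinarith
      have := le_min hs1 hs2
      nlinarith [abs_nonneg (Real.sin (ω*T)), abs_nonneg (Real.cos T)]
    calc |Real.sin T * Real.cos (ω*T) * ω - Real.cos T * Real.sin (ω*T)|
        ≤ |Real.sin T * Real.cos (ω*T) * ω| + |Real.cos T * Real.sin (ω*T)| := abs_sub _ _
      _ ≤ 2 * min 1 (ω * (1 + T)) := by linarith
  rw [abs_div, abs_of_pos (by nlinarith : (0:ℝ) < (1-ω)*(1+ω))]
  rw [div_le_iff₀ (by nlinarith)]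
  nlinarith

lemma cesaro {g : ℝ → ℝ} (hint : ∀ a b : ℝ, IntervalIntegrable g volume a b)
    (h : Tendsto g atTop (nhds 0)) :
    Tendsto (fun T => (∫ t in (0:ℝ)..T, g t) / T) atTop (nhds 0) := by
  rw [Metric.tendsto_nhds]
  intro ε hε
  have h2 : ∀ᶠ t in atTop, |g t| < ε/2 := by
    have := Metric.tendsto_nhds.1 h (ε/2) (by linarith)
    simpa [Real.dist_eq] using this
  obtain ⟨M0, hM0⟩ := eventually_atTop.1 h2
  set M := max M0 0 with hMdef
  have hM : ∀ t, M ≤ t → |g t| ≤ ε/2 := fun t ht => (hM0 t (le_trans (le_max_left _ _) ht)).le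
  have hMpos : 0 ≤ M := le_max_right _ _
  set C := |∫ t in (0:ℝ)..M, g t| with hC
  have hCpos : 0 ≤ C := abs_nonneg _
  filter_upwards [eventually_ge_atTop (max M (2*C/ε + 1)), eventually_ge_atTop (1:ℝ)]
    with T hT1 hT2
  have hTM : M ≤ T := le_trans (le_max_left _ _) hT1
  have hTC : 2*C/ε + 1 ≤ T := le_trans (le_max_right _ _) hT1
  have hTpos : (0:ℝ) < T := lt_of_lt_of_le zero_lt_one hT2
  have hsplit : ∫ t in (0:ℝ)..T, g t = (∫ t in (0:ℝ)..M, g t) + ∫ t in M..T, g t :=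
    (intervalIntegral.integral_add_adjacent_intervals (hint 0 M) (hint M T)).symm
  have htail : |∫ t in M..T, g t| ≤ ε/2 * T := by
    have := intervalIntegral.norm_integral_le_of_norm_le_const (C := ε/2) (f := g)
      (a := M) (b := T) ?_
    · calc |∫ t in M..T, g t| ≤ ε/2 * |T - M| := this
        _ ≤ ε/2 * T := by
          rw [abs_of_nonneg (by linarith)]
          nlinarith
    · intro x hx
      rw [Set.uIoc_of_le hTM] at hx
      exact hM x hx.1.le
  have hbound : |∫ t in (0:ℝ)..T, g t| ≤ C + ε/2 * T := by
    rw [hsplit]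
    calc |(∫ t in (0:ℝ)..M, g t) + ∫ t in M..T, g t|
        ≤ |∫ t in (0:ℝ)..M, g t| + |∫ t in M..T, g t| := abs_add_le _ _
      _ ≤ C + ε/2 * T := by rw [← hC]; linarith
  rw [Real.dist_eq, sub_zero, abs_div, abs_of_pos hTpos, div_lt_iff₀ hTpos]
  have hdc : 2*C/ε * ε = 2*C := div_mul_cancel₀ _ hε.ne'
  have : C < ε/2 * T := by nlinarith [mul_le_mul_of_nonneg_right hTC hε.le]
  calc |∫ t in (0:ℝ)..T, g t| ≤ C + ε/2 * T := hbound
    _ < ε * T := by nlinarith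

lemma continuous_rpow_cst (q : ℝ) (hq : 0 ≤ q) : Continuous (fun x : ℝ => x ^ q) :=
  continuous_iff_continuousAt.2 fun x => Real.continuousAt_rpow_const x q (Or.inr hq)

lemma rpow_sin_bound (p : ℝ) (hp : 1 < p) (T : ℝ) (hT : 1 ≤ T) :
    |∫ t in (0:ℝ)..T, t ^ (1/p) * Real.sin t| ≤ 3 + 2 * T ^ (1/p) := by
  have hp0 : (0:ℝ) < p := by linarith
  have hq0 : (0:ℝ) < 1/p := by positivity
  have hcont : Continuous (fun t : ℝ => t ^ (1/p) * Real.sin t) :=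
    (continuous_rpow_cst _ hq0.le).mul Real.continuous_sin
  have hint : ∀ a b : ℝ, IntervalIntegrable (fun t : ℝ => t ^ (1/p) * Real.sin t) volume a b :=
    fun a b => hcont.intervalIntegrable a b
  have hsplit : ∫ t in (0:ℝ)..T, t ^ (1/p) * Real.sin t
      = (∫ t in (0:ℝ)..(1:ℝ), t ^ (1/p) * Real.sin t) + ∫ t in (1:ℝ)..T, t ^ (1/p) * Real.sin t :=
    (intervalIntegral.integral_add_adjacent_intervals (hint 0 1) (hint 1 T)).symm
  -- part on [0,1]
  have h01 : |∫ t in (0:ℝ)..(1:ℝ), t ^ (1/p) * Real.sin t| ≤ 1 := by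
    have := intervalIntegral.norm_integral_le_of_norm_le_const (C := 1)
      (f := fun t : ℝ => t ^ (1/p) * Real.sin t) (a := 0) (b := 1) ?_
    · simpa using this
    · intro x hx
      rw [Set.uIoc_of_le (by norm_num)] at hx
      have h1 : |x ^ (1/p)| ≤ 1 := by
        rw [abs_of_nonneg (Real.rpow_nonneg hx.1.le _)]
        exact Real.rpow_le_one hx.1.le hx.2 hq0.le
      have h2 : |Real.sin x| ≤ 1 := abs_le.mpr ⟨Real.neg_one_le_sin x, Real.sin_le_one x⟩
      calc ‖x ^ (1/p) * Real.sin x‖ = |x ^ (1/p)| * |Real.sin x| := abs_mul _ _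
        _ ≤ 1 * 1 := mul_le_mul h1 h2 (abs_nonneg _) zero_le_one
        _ = 1 := by norm_num
  -- integration by parts on [1,T]
  have hu : ∀ x ∈ Set.uIcc (1:ℝ) T, HasDerivAt (fun t : ℝ => t ^ (1/p))
      ((1/p) * x ^ (1/p - 1)) x := by
    intro x hx
    rw [Set.uIcc_of_le hT] at hx
    exact Real.hasDerivAt_rpow_const (Or.inl (by linarith [hx.1] : x ≠ 0))
  have hv : ∀ x ∈ Set.uIcc (1:ℝ) T, HasDerivAt (fun t : ℝ => -Real.cos t) (Real.sin x) x := by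
    intro x _
    have := (Real.hasDerivAt_cos x).neg; rwa [neg_neg] at this
  have hu'cont : ContinuousOn (fun x : ℝ => (1/p) * x ^ (1/p - 1)) (Set.uIcc (1:ℝ) T) := by
    apply ContinuousOn.mul continuousOn_const
    intro x hx
    rw [Set.uIcc_of_le hT] at hx
    exact (Real.continuousAt_rpow_const x _ (Or.inl (by linarith [hx.1]))).continuousWithinAt
  have hu'int : IntervalIntegrable (fun x : ℝ => (1/p) * x ^ (1/p - 1)) volume 1 T :=
    hu'cont.intervalIntegrable
  have hparts := intervalIntegral.integral_mul_deriv_eq_deriv_mul hu hv hu'int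
    (Real.continuous_sin.intervalIntegrable 1 T)
  -- bound the remainder integral
  have hrem : |∫ x in (1:ℝ)..T, (1/p) * x ^ (1/p - 1) * (-Real.cos x)| ≤ T ^ (1/p) - 1 := by
    have habs := intervalIntegral.abs_integral_le_integral_abs (μ := volume)
      (f := fun x : ℝ => (1/p) * x ^ (1/p - 1) * (-Real.cos x)) hT
    have hmono : (∫ x in (1:ℝ)..T, |(1/p) * x ^ (1/p - 1) * (-Real.cos x)|)
        ≤ ∫ x in (1:ℝ)..T, (1/p) * x ^ (1/p - 1) := by
      apply intervalIntegral.integral_mono_on hT _ (by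
        exact (ContinuousOn.intervalIntegrable (by rwa [Set.uIcc_of_le hT] at hu'cont ⊢)))
      · intro x hx
        rw [abs_mul, abs_mul]
        have hx1 : (0:ℝ) < x := by linarith [hx.1]
        rw [abs_of_nonneg (Real.rpow_nonneg hx1.le _), abs_of_nonneg (by positivity : (0:ℝ) ≤ 1/p)]
        have : |(-Real.cos x)| ≤ 1 := by
          rw [abs_neg]; exact abs_le.mpr ⟨Real.neg_one_le_cos x, Real.cos_le_one x⟩
        have hnn : 0 ≤ 1/p * x ^ (1/p - 1) := by positivity
        nlinarith [mul_le_mul_of_nonneg_left this hnn]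
      · apply IntervalIntegrable.abs
        apply ContinuousOn.intervalIntegrable
        apply ContinuousOn.mul (by rwa [Set.uIcc_of_le hT] at hu'cont ⊢)
        exact (Real.continuous_cos.neg).continuousOn
    have hcomp : ∫ x in (1:ℝ)..T, (1/p) * x ^ (1/p - 1) = T ^ (1/p) - 1 := by
      rw [intervalIntegral.integral_const_mul, integral_rpow (Or.inl (by linarith))]
      have : (1/p - 1) + 1 = 1/p := by ring
      rw [this, Real.one_rpow]
      field_simp
    calc |∫ x in (1:ℝ)..T, (1/p) * x ^ (1/p - 1) * (-Real.cos x)|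
        ≤ ∫ x in (1:ℝ)..T, |(1/p) * x ^ (1/p - 1) * (-Real.cos x)| := habs
      _ ≤ T ^ (1/p) - 1 := by rw [← hcomp] at *; linarith
  -- assemble
  have hT1 : (1:ℝ) ≤ T ^ (1/p) := Real.one_le_rpow hT hq0.le
  have hcos1 : |Real.cos T| ≤ 1 := abs_le.mpr ⟨Real.neg_one_le_cos T, Real.cos_le_one T⟩
  have hcos2 : |Real.cos 1| ≤ 1 := abs_le.mpr ⟨Real.neg_one_le_cos 1, Real.cos_le_one 1⟩
  have h1T : |∫ t in (1:ℝ)..T, t ^ (1/p) * Real.sin t| ≤ 2 * T ^ (1/p) := by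
    rw [hparts]
    have e1 : |T ^ (1/p) * (-Real.cos T)| ≤ T ^ (1/p) := by
      rw [abs_mul, abs_neg, abs_of_nonneg (Real.rpow_nonneg (by linarith) _)]
      nlinarith [Real.rpow_nonneg (show (0:ℝ) ≤ T by linarith) (1/p)]
    have e2 : |(1:ℝ) ^ (1/p) * (-Real.cos 1)| ≤ 1 := by
      rw [Real.one_rpow, abs_mul, abs_neg, abs_one, one_mul]; exact hcos2
    calc |T ^ (1/p) * (-Real.cos T) - 1 ^ (1/p) * (-Real.cos 1)
          - ∫ x in (1:ℝ)..T, (1/p) * x ^ (1/p - 1) * (-Real.cos x)|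
        ≤ |T ^ (1/p) * (-Real.cos T)| + |(1:ℝ) ^ (1/p) * (-Real.cos 1)|
          + |∫ x in (1:ℝ)..T, (1/p) * x ^ (1/p - 1) * (-Real.cos x)| := by
          exact (abs_sub _ _).trans (by gcongr; exact abs_sub _ _)
      _ ≤ T ^ (1/p) + 1 + (T ^ (1/p) - 1) := by linarith
      _ = 2 * T ^ (1/p) := by ring
  calc |∫ t in (0:ℝ)..T, t ^ (1/p) * Real.sin t|
      ≤ |∫ t in (0:ℝ)..(1:ℝ), t ^ (1/p) * Real.sin t|
        + |∫ t in (1:ℝ)..T, t ^ (1/p) * Real.sin t| := by rw [hsplit]; exact abs_add_le _ _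
    _ ≤ 3 + 2 * T ^ (1/p) := by linarith

lemma summable_inv_rpow (q : ℝ) (hq : 1 < q) :
    Summable (fun n : ℕ => (((n : ℝ) + 1) ^ q)⁻¹) := by
  refine (summable_shift q hq).congr fun n => ?_
  rw [← Real.rpow_neg (by positivity)]

lemma continuous_S (p : ℝ) (hp : 1 < p) :
    Continuous (fun t : ℝ => ∑' n : ℕ, Real.sin (t / ((n : ℝ) + 1) ^ p)) := by
  rw [continuous_iff_continuousAt]
  intro x
  set R := |x| + 1 with hR
  have hcont : ContinuousOn (fun t : ℝ => ∑' n : ℕ, Real.sin (t / ((n : ℝ) + 1) ^ p))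
      (Set.Ioo (x - 1) (x + 1)) := by
    apply continuousOn_tsum (f := fun (n : ℕ) (t : ℝ) => Real.sin (t / ((n : ℝ) + 1) ^ p))
      (u := fun n : ℕ => R * (((n : ℝ) + 1) ^ p)⁻¹)
    · intro n
      exact (Real.continuous_sin.comp (continuous_id.div_const _)).continuousOn
    · exact (summable_inv_rpow p hp).mul_left R
    · intro n t ht
      have hb : (0:ℝ) < ((n : ℝ) + 1) ^ p := Real.rpow_pos_of_pos (by positivity) p
      have htR : |t| ≤ R := by
        rw [hR, abs_le]
        cases' abs_le.1 (le_refl |x|) with h1 h2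
        constructor <;> [linarith [ht.1]; linarith [ht.2]]
      calc ‖Real.sin (t / ((n : ℝ) + 1) ^ p)‖ ≤ |t / ((n : ℝ) + 1) ^ p| := Real.abs_sin_le_abs
        _ = |t| * (((n : ℝ) + 1) ^ p)⁻¹ := by
            rw [abs_div, abs_of_pos hb, div_eq_mul_inv]
        _ ≤ R * (((n : ℝ) + 1) ^ p)⁻¹ := by
            apply mul_le_mul_of_nonneg_right htR (by positivity)
  exact hcont.continuousAt (IsOpen.mem_nhds isOpen_Ioo ⟨by linarith, by linarith⟩)

lemma swap_int (p : ℝ) (hp : 1 < p) (T : ℝ) (hT : 0 ≤ T) :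
    ∫ t in (0:ℝ)..T, (∑' n : ℕ, Real.sin (t / ((n : ℝ) + 1) ^ p)) * Real.sin t
      = ∑' n : ℕ, ∫ t in (0:ℝ)..T, Real.sin (t / ((n : ℝ) + 1) ^ p) * Real.sin t := by
  simp_rw [intervalIntegral.integral_of_le hT, ← tsum_mul_right]
  refine (integral_tsum_of_summable_integral_norm (fun n => ?_) ?_).symm
  · exact ((Real.continuous_sin.comp (continuous_id.div_const _)).mul
      Real.continuous_sin).integrableOn_Ioc
  · have hS : Summable (fun n : ℕ => T * T * ((((n:ℝ)+1)) ^ p)⁻¹) :=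
      (summable_inv_rpow p hp).mul_left (T * T)
    apply Summable.of_nonneg_of_le (fun n => integral_nonneg (fun t => norm_nonneg _))
      (fun n => ?_) hS
    have hb : (0:ℝ) < ((n : ℝ) + 1) ^ p := Real.rpow_pos_of_pos (by positivity) p
    have hbd : ∀ t ∈ Set.Ioc (0:ℝ) T,
        ‖Real.sin (t / ((n : ℝ) + 1) ^ p) * Real.sin t‖ ≤ T * (((n : ℝ) + 1) ^ p)⁻¹ := by
      intro t ht
      have h1 : |Real.sin (t / ((n : ℝ) + 1) ^ p)| ≤ T * (((n : ℝ) + 1) ^ p)⁻¹ := by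
        calc |Real.sin (t / ((n : ℝ) + 1) ^ p)| ≤ |t / ((n : ℝ) + 1) ^ p| := Real.abs_sin_le_abs
          _ = |t| * (((n : ℝ) + 1) ^ p)⁻¹ := by rw [abs_div, abs_of_pos hb, div_eq_mul_inv]
          _ ≤ T * (((n : ℝ) + 1) ^ p)⁻¹ := by
              apply mul_le_mul_of_nonneg_right _ (by positivity)
              rw [abs_of_pos ht.1]; exact ht.2
      have h2 : |Real.sin t| ≤ 1 := abs_le.mpr ⟨Real.neg_one_le_sin t, Real.sin_le_one t⟩
      calc ‖Real.sin (t / ((n : ℝ) + 1) ^ p) * Real.sin t‖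
          = |Real.sin (t / ((n : ℝ) + 1) ^ p)| * |Real.sin t| := abs_mul _ _
        _ ≤ (T * (((n : ℝ) + 1) ^ p)⁻¹) * 1 := by
            apply mul_le_mul h1 h2 (abs_nonneg _) (by positivity)
        _ = T * (((n : ℝ) + 1) ^ p)⁻¹ := by ring
    calc ∫ t in Set.Ioc (0:ℝ) T, ‖Real.sin (t / ((n : ℝ) + 1) ^ p) * Real.sin t‖
        ≤ ∫ _t in Set.Ioc (0:ℝ) T, T * (((n : ℝ) + 1) ^ p)⁻¹ := by
          apply setIntegral_mono_on
          · exact (((Real.continuous_sin.comp (continuous_id.div_const _)).mul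
              Real.continuous_sin).integrableOn_Ioc).norm
          · exact integrableOn_const (by simp [Real.volume_Ioc])
          · exact measurableSet_Ioc
          · exact hbd
      _ = T * (T * (((n : ℝ) + 1) ^ p)⁻¹) := by
          rw [setIntegral_const, Real.volume_real_Ioc_of_le hT, smul_eq_mul]
          ring
      _ ≤ T * T * (((n : ℝ) + 1) ^ p)⁻¹ := by rw [mul_assoc]

noncomputable def omg (p : ℝ) (n : ℕ) : ℝ := (((n:ℝ) + 1) ^ p)⁻¹

noncomputable def th (p : ℝ) : ℝ := (1 + 1/p)/2

lemma omg_pos (p : ℝ) (n : ℕ) : 0 < omg p n :=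
  inv_pos.2 (Real.rpow_pos_of_pos (by positivity) p)

lemma omg_zero (p : ℝ) : omg p 0 = 1 := by unfold omg; norm_num

lemma omg_sin (p : ℝ) (n : ℕ) (t : ℝ) :
    Real.sin (t / ((n : ℝ) + 1) ^ p) = Real.sin (omg p n * t) := by
  unfold omg; rw [div_eq_mul_inv, mul_comm]

lemma omg_half {p : ℝ} (hp : 1 < p) (n : ℕ) : omg p (n+1) ≤ 1/2 := by
  have h2 : (2:ℝ) ≤ ((((n:ℕ)+1:ℕ):ℝ) + 1) ^ p := by
    calc (2:ℝ) = 2 ^ (1:ℝ) := (Real.rpow_one 2).symm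
      _ ≤ 2 ^ p := Real.rpow_le_rpow_of_exponent_le (by norm_num) hp.le
      _ ≤ ((((n:ℕ)+1:ℕ):ℝ) + 1) ^ p := by
          apply Real.rpow_le_rpow (by norm_num) (by push_cast; linarith) (by linarith)
  unfold omg
  calc (((((n:ℕ)+1:ℕ):ℝ) + 1) ^ p)⁻¹ ≤ (2:ℝ)⁻¹ := by
        apply inv_anti₀ (by norm_num) h2
    _ = 1/2 := by norm_num

lemma th_pos {p : ℝ} (hp : 1 < p) : 0 < th p := by
  have : (0:ℝ) < p := by linarith
  unfold th; positivity
lemma th_lt {p : ℝ} (hp : 1 < p) : th p < 1 := by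
  have h : 1/p < 1 := by rw [div_lt_one (by linarith)]; exact hp
  unfold th; linarith
lemma th_mul {p : ℝ} (hp : 1 < p) : 1 < p * th p := by
  unfold th
  have hp' : p ≠ 0 := by linarith
  have he : p * ((1 + 1/p)/2) = (p + 1)/2 := by
    field_simp
  rw [he]; linarith

lemma summable_omg_th {p : ℝ} (hp : 1 < p) : Summable (fun n : ℕ => omg p n ^ th p) := by
  refine (summable_shift (p * th p) (th_mul hp)).congr fun n => ?_
  have hb : (0:ℝ) ≤ (n:ℝ)+1 := by positivity
  show ((n:ℝ)+1) ^ (-(p * th p)) = ((((n:ℝ)+1) ^ p)⁻¹) ^ th p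
  rw [← Real.rpow_neg hb, ← Real.rpow_mul hb]
  congr 1
  ring

lemma summable_omg_th' {p : ℝ} (hp : 1 < p) : Summable (fun n : ℕ => omg p (n+1) ^ th p) :=
  (summable_nat_add_iff 1).2 (summable_omg_th hp)

lemma I_bound {p : ℝ} (hp : 1 < p) (n : ℕ) {T : ℝ} (hT : 0 ≤ T) :
    |∫ t in (0:ℝ)..T, Real.sin (omg p (n+1) * t) * Real.sin t|
      ≤ 4 * (omg p (n+1) ^ th p * (1+T) ^ th p) := by
  calc |∫ t in (0:ℝ)..T, Real.sin (omg p (n+1) * t) * Real.sin t|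
      ≤ 4 * min 1 (omg p (n+1) * (1+T)) :=
        int_sin_mul_bound _ _ (omg_pos _ _) (omg_half hp n) hT
    _ ≤ 4 * (omg p (n+1) * (1+T)) ^ th p := by
        apply mul_le_mul_of_nonneg_left
          (min_le_rpow (mul_nonneg (omg_pos p (n+1)).le (by linarith)) (th_pos hp) (th_lt hp).le)
          (by norm_num)
    _ = 4 * (omg p (n+1) ^ th p * (1+T) ^ th p) := by
        rw [Real.mul_rpow (omg_pos _ _).le (by linarith)]

lemma I_summable {p : ℝ} (hp : 1 < p) {T : ℝ} (hT : 0 ≤ T) :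
    Summable (fun n : ℕ => ∫ t in (0:ℝ)..T, Real.sin (omg p (n+1) * t) * Real.sin t) := by
  apply Summable.of_norm
  exact Summable.of_nonneg_of_le (fun n => norm_nonneg _) (fun n => I_bound hp n hT)
    (((summable_omg_th' hp).mul_right ((1+T) ^ th p)).mul_left 4)

set_option maxHeartbeats 1000000 in
lemma tail_tendsto {p : ℝ} (hp : 1 < p) :
    Tendsto (fun T : ℝ =>
      (∑' n : ℕ, ∫ t in (0:ℝ)..T, Real.sin (omg p (n+1) * t) * Real.sin t) / T)
      atTop (nhds 0) := by
  set θ := th p with hθdef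
  have hθpos := th_pos hp
  have hθlt := th_lt hp
  set K := ∑' n : ℕ, omg p (n+1) ^ θ with hK
  have hK0 : 0 ≤ K := tsum_nonneg (fun n => Real.rpow_nonneg (omg_pos _ _).le θ)
  apply squeeze_zero_norm' (a := fun T : ℝ => 4 * K * (2 ^ θ * T ^ (θ - 1)))
  · filter_upwards [eventually_ge_atTop (1:ℝ)] with T hT
    have hT0 : (0:ℝ) < T := lt_of_lt_of_le zero_lt_one hT
    have hsum1 : Summable (fun n : ℕ =>
        |∫ t in (0:ℝ)..T, Real.sin (omg p (n+1) * t) * Real.sin t|) :=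
      Summable.of_nonneg_of_le (fun n => abs_nonneg _) (fun n => I_bound hp n hT0.le)
        (((summable_omg_th' hp).mul_right ((1+T) ^ θ)).mul_left 4)
    have h1 : |∑' n : ℕ, ∫ t in (0:ℝ)..T, Real.sin (omg p (n+1) * t) * Real.sin t|
        ≤ ∑' n : ℕ, |∫ t in (0:ℝ)..T, Real.sin (omg p (n+1) * t) * Real.sin t| := by
      have := norm_tsum_le_tsum_norm
        (f := fun n : ℕ => ∫ t in (0:ℝ)..T, Real.sin (omg p (n+1) * t) * Real.sin t)
        (by simpa [Real.norm_eq_abs] using hsum1)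
      simpa [Real.norm_eq_abs] using this
    have hsum2 : Summable (fun n : ℕ => 4 * (omg p (n+1) ^ θ * (1+T) ^ θ)) :=
      ((summable_omg_th' hp).mul_right ((1+T) ^ θ)).mul_left 4
    have habs : |∑' n : ℕ, ∫ t in (0:ℝ)..T, Real.sin (omg p (n+1) * t) * Real.sin t|
        ≤ ∑' n : ℕ, |∫ t in (0:ℝ)..T, Real.sin (omg p (n+1) * t) * Real.sin t| := by
      have := norm_tsum_le_tsum_norm
        (f := fun n : ℕ => ∫ t in (0:ℝ)..T, Real.sin (omg p (n+1) * t) * Real.sin t)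
        (by simpa [Real.norm_eq_abs] using hsum1)
      simpa [Real.norm_eq_abs] using this
    have h1 : |∑' n : ℕ, ∫ t in (0:ℝ)..T, Real.sin (omg p (n+1) * t) * Real.sin t|
        ≤ 4 * K * (1+T) ^ θ := by
      calc |∑' n : ℕ, ∫ t in (0:ℝ)..T, Real.sin (omg p (n+1) * t) * Real.sin t|
          ≤ ∑' n : ℕ, |∫ t in (0:ℝ)..T, Real.sin (omg p (n+1) * t) * Real.sin t| := habs
        _ ≤ ∑' n : ℕ, 4 * (omg p (n+1) ^ θ * (1+T) ^ θ) :=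
            Summable.tsum_le_tsum (fun n => I_bound hp n hT0.le) hsum1 hsum2
        _ = 4 * K * (1+T) ^ θ := by
            rw [show (fun n : ℕ => 4 * (omg p (n+1) ^ θ * (1+T) ^ θ))
                = fun n : ℕ => omg p (n+1) ^ θ * (4 * (1+T) ^ θ) from funext fun n => by ring]
            rw [tsum_mul_right, ← hK]
            ring
    have h2 : (1+T) ^ θ ≤ 2 ^ θ * T ^ θ := by
      calc (1+T) ^ θ ≤ (2*T) ^ θ :=
            Real.rpow_le_rpow (by linarith) (by linarith) hθpos.le
        _ = 2 ^ θ * T ^ θ := Real.mul_rpow (by norm_num) hT0.le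
    have h3 : T ^ θ / T = T ^ (θ - 1) := by
      rw [Real.rpow_sub hT0, Real.rpow_one]
    rw [norm_div, Real.norm_eq_abs, Real.norm_eq_abs, abs_of_pos hT0, div_le_iff₀ hT0]
    have h4 : 2 ^ θ * T ^ (θ-1) * T = 2 ^ θ * T ^ θ := by
      rw [mul_assoc, ← h3]
      field_simp
    calc |∑' n : ℕ, ∫ t in (0:ℝ)..T, Real.sin (omg p (n+1) * t) * Real.sin t|
        ≤ 4 * K * (1+T) ^ θ := h1
      _ ≤ 4 * K * (2 ^ θ * T ^ θ) := by
          apply mul_le_mul_of_nonneg_left h2 (by positivity)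
      _ = 4 * K * (2 ^ θ * T ^ (θ-1)) * T := by rw [mul_assoc (4*K), h4, mul_assoc]
  · have h5 : Tendsto (fun T : ℝ => T ^ (-(1 - θ))) atTop (nhds 0) :=
      tendsto_rpow_neg_atTop (by linarith)
    have h6 : Tendsto (fun T : ℝ => 4 * K * 2 ^ θ * T ^ (-(1 - θ))) atTop (nhds 0) := by
      simpa using h5.const_mul (4 * K * 2 ^ θ)
    apply h6.congr
    intro T
    rw [show -(1 - θ) = θ - 1 from by ring]
    ring

lemma head_tendsto :
    Tendsto (fun T : ℝ => (∫ t in (0:ℝ)..T, Real.sin t * Real.sin t) / T)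
      atTop (nhds (1/2)) := by
  have hcalc : ∀ T : ℝ, (∫ t in (0:ℝ)..T, Real.sin t * Real.sin t)
      = (T - Real.sin T * Real.cos T)/2 := by
    intro T
    simp_rw [← pow_two]
    rw [integral_sin_sq]
    simp
    ring
  have h2 : Tendsto (fun T : ℝ => Real.sin T * Real.cos T/(2*T)) atTop (nhds 0) := by
    apply squeeze_zero_norm' (a := fun T : ℝ => 1/(2*T))
    · filter_upwards [eventually_gt_atTop (0:ℝ)] with T hT
      rw [norm_div, Real.norm_eq_abs, Real.norm_eq_abs,
        abs_of_pos (by linarith : (0:ℝ) < 2*T), abs_mul]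
      gcongr
      nlinarith [abs_le.mpr ⟨Real.neg_one_le_sin T, Real.sin_le_one T⟩,
        abs_le.mpr ⟨Real.neg_one_le_cos T, Real.cos_le_one T⟩,
        abs_nonneg (Real.sin T), abs_nonneg (Real.cos T)]
    · exact tendsto_const_nhds.div_atTop (tendsto_id.const_mul_atTop two_pos)
  have h1 : Tendsto (fun T : ℝ => 1/2 - Real.sin T * Real.cos T/(2*T)) atTop (nhds (1/2)) := by
    simpa using (tendsto_const_nhds (x := (1:ℝ)/2) (f := atTop)).sub h2
  apply h1.congr'
  filter_upwards [eventually_gt_atTop (0:ℝ)] with T hT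
  rw [hcalc]
  field_simp

lemma B_tendsto {p : ℝ} (hp : 1 < p) (c : ℝ) :
    Tendsto (fun T : ℝ => c * ((∫ t in (0:ℝ)..T, t ^ (1/p) * Real.sin t) / T))
      atTop (nhds 0) := by
  have hB0 : Tendsto (fun T : ℝ => (∫ t in (0:ℝ)..T, t ^ (1/p) * Real.sin t) / T)
      atTop (nhds 0) := by
    apply squeeze_zero_norm' (a := fun T : ℝ => 3/T + 2 * T ^ (1/p - 1))
    · filter_upwards [eventually_ge_atTop (1:ℝ)] with T hT
      have hTpos : (0:ℝ) < T := lt_of_lt_of_le zero_lt_one hT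
      rw [norm_div, Real.norm_eq_abs, Real.norm_eq_abs, abs_of_pos hTpos, div_le_iff₀ hTpos]
      have hbd := rpow_sin_bound p hp T hT
      have hTpow : T ^ (1/p - 1) * T = T ^ (1/p) := by
        rw [Real.rpow_sub hTpos, Real.rpow_one]
        field_simp
      have hexp : (3/T + 2 * T ^ (1/p - 1)) * T = 3 + 2 * T ^ (1/p) := by
        rw [add_mul, div_mul_cancel₀ _ hTpos.ne', mul_assoc, hTpow]
      rw [hexp]
      exact hbd
    · have t1 : Tendsto (fun T : ℝ => 3/T) atTop (nhds 0) :=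
        tendsto_const_nhds.div_atTop tendsto_id
      have hq1 : 1/p < 1 := by rw [div_lt_one (by linarith)]; exact hp
      have t2 : Tendsto (fun T : ℝ => 2 * T ^ (-(1 - 1/p))) atTop (nhds 0) := by
        simpa using (tendsto_rpow_neg_atTop (by linarith : (0:ℝ) < 1 - 1/p)).const_mul 2
      have t2' : Tendsto (fun T : ℝ => 2 * T ^ (1/p - 1)) atTop (nhds 0) := by
        apply t2.congr
        intro T
        rw [show -(1 - 1/p) = 1/p - 1 from by ring]
      simpa using t1.add t2'
  simpa using hB0.const_mul c

lemma decomp {p : ℝ} (hp : 1 < p) (c : ℝ) {T : ℝ} (hT : 0 ≤ T) :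
    (∫ t in (0:ℝ)..T,
        ((∑' n : ℕ, Real.sin (t / ((n : ℝ) + 1) ^ p)) - c * t ^ (1/p)) * Real.sin t)
      = (∫ t in (0:ℝ)..T, Real.sin t * Real.sin t)
        + (∑' n : ℕ, ∫ t in (0:ℝ)..T, Real.sin (omg p (n+1) * t) * Real.sin t)
        - c * ∫ t in (0:ℝ)..T, t ^ (1/p) * Real.sin t := by
  have hq0 : (0:ℝ) < 1/p := by
    have : (0:ℝ) < p := by linarith
    positivity
  have hScont := continuous_S p hp
  have hint1 : IntervalIntegrable
      (fun t : ℝ => (∑' n : ℕ, Real.sin (t / ((n : ℝ) + 1) ^ p)) * Real.sin t) volume 0 T :=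
    (hScont.mul Real.continuous_sin).intervalIntegrable 0 T
  have hint2 : IntervalIntegrable (fun t : ℝ => c * (t ^ (1/p) * Real.sin t)) volume 0 T :=
    (continuous_const.mul
      ((continuous_rpow_cst _ hq0.le).mul Real.continuous_sin)).intervalIntegrable 0 T
  have heq : (fun t : ℝ =>
      ((∑' n : ℕ, Real.sin (t / ((n : ℝ) + 1) ^ p)) - c * t ^ (1/p)) * Real.sin t)
      = fun t : ℝ => (∑' n : ℕ, Real.sin (t / ((n : ℝ) + 1) ^ p)) * Real.sin t
          - c * (t ^ (1/p) * Real.sin t) := funext fun t => by ring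
  rw [heq, intervalIntegral.integral_sub hint1 hint2, intervalIntegral.integral_const_mul]
  congr 1
  rw [swap_int p hp T hT]
  have hrw : ∀ n : ℕ, (∫ t in (0:ℝ)..T, Real.sin (t / ((n : ℝ) + 1) ^ p) * Real.sin t)
      = ∫ t in (0:ℝ)..T, Real.sin (omg p n * t) * Real.sin t := by
    intro n
    congr 1
    funext t
    rw [omg_sin p n t]
  simp_rw [hrw]
  have hsumI : Summable (fun n : ℕ => ∫ t in (0:ℝ)..T, Real.sin (omg p n * t) * Real.sin t) :=
    (summable_nat_add_iff 1).1 (I_summable hp hT)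
  rw [Summable.tsum_eq_zero_add hsumI]
  congr 1
  congr 1
  funext t
  rw [omg_zero p, one_mul]

/-- For `p > 1`, `ΔS_p(t) = S_p(t) − α_p t^{1/p}` does not tend to `0` as `t → ∞`. -/
theorem stmt_18 (p : ℝ) (hp : 1 < p) :
    ¬ Tendsto (fun t : ℝ =>
        (∑' n : ℕ, Real.sin (t / ((n : ℝ) + 1) ^ p))
          - Real.Gamma (1 - 1 / p) * Real.sin (π / (2 * p)) * t ^ (1 / p))
      atTop (nhds 0) := by
  intro h
  set c := Real.Gamma (1 - 1 / p) * Real.sin (π / (2 * p)) with hc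
  have hq0 : (0:ℝ) < 1/p := by
    have : (0:ℝ) < p := by linarith
    positivity
  have hScont := continuous_S p hp
  have hfcont : Continuous (fun t : ℝ =>
      ((∑' n : ℕ, Real.sin (t / ((n : ℝ) + 1) ^ p)) - c * t ^ (1/p)) * Real.sin t) :=
    (hScont.sub (continuous_const.mul (continuous_rpow_cst _ hq0.le))).mul Real.continuous_sin
  have htend0 : Tendsto (fun t : ℝ =>
      ((∑' n : ℕ, Real.sin (t / ((n : ℝ) + 1) ^ p)) - c * t ^ (1/p)) * Real.sin t)
      atTop (nhds 0) := by
    apply squeeze_zero_norm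
      (a := fun t : ℝ => |(∑' n : ℕ, Real.sin (t / ((n : ℝ) + 1) ^ p)) - c * t ^ (1/p)|)
    · intro t
      rw [norm_mul, Real.norm_eq_abs, Real.norm_eq_abs]
      have h2 : |Real.sin t| ≤ 1 := abs_le.mpr ⟨Real.neg_one_le_sin t, Real.sin_le_one t⟩
      nlinarith [abs_nonneg ((∑' n : ℕ, Real.sin (t / ((n : ℝ) + 1) ^ p)) - c * t ^ (1/p))]
    · have := (continuous_abs.tendsto 0).comp h
      simpa [Function.comp_def] using this
  have hF0 : Tendsto (fun T : ℝ => (∫ t in (0:ℝ)..T,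
      ((∑' n : ℕ, Real.sin (t / ((n : ℝ) + 1) ^ p)) - c * t ^ (1/p)) * Real.sin t) / T)
      atTop (nhds 0) := cesaro (fun a b => hfcont.intervalIntegrable a b) htend0
  have hcomb : Tendsto (fun T : ℝ =>
      (∫ t in (0:ℝ)..T, Real.sin t * Real.sin t) / T
      + (∑' n : ℕ, ∫ t in (0:ℝ)..T, Real.sin (omg p (n+1) * t) * Real.sin t) / T
      - c * ((∫ t in (0:ℝ)..T, t ^ (1/p) * Real.sin t) / T)) atTop (nhds (1/2)) := by
    have := (head_tendsto.add (tail_tendsto hp)).sub (B_tendsto hp c)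
    simpa using this
  have hfinal : Tendsto (fun T : ℝ => (∫ t in (0:ℝ)..T,
      ((∑' n : ℕ, Real.sin (t / ((n : ℝ) + 1) ^ p)) - c * t ^ (1/p)) * Real.sin t) / T)
      atTop (nhds (1/2)) := by
    apply hcomb.congr'
    filter_upwards [eventually_ge_atTop (0:ℝ)] with T hT
    rw [decomp hp c hT]
    ring
  exact absurd (tendsto_nhds_unique hF0 hfinal) (by norm_num)
end

section
/- For any N ∈ ℕ (including 0) and all t ≥ 0, ∑_{n=1}^∞ sin(t/n²) ≥ −N + A₂(N)·t − B₂(N)·t³, where A₂(N) = π²/6 − ∑_{n=1}^N n^{-2} and B₂(N) = (1/6)(π⁶/945 − ∑_{n=1}^N n^{-6}). -/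
open Real

lemma my_bernoulli'_five : bernoulli' 5 = 0 := by
  have h1 : Nat.choose 5 2 = 10 := by decide
  have h2 : Nat.choose 5 3 = 10 := by decide
  rw [bernoulli'_def]
  norm_num [Finset.sum_range_succ, h1, h2]

lemma my_bernoulli'_six : bernoulli' 6 = 1 / 42 := by
  have h1 : Nat.choose 6 2 = 15 := by decide
  have h2 : Nat.choose 6 3 = 20 := by decide
  have h3 : Nat.choose 6 4 = 15 := by decide
  rw [bernoulli'_def]
  norm_num [Finset.sum_range_succ, h1, h2, h3, my_bernoulli'_five]

lemma my_hasSum_zeta_six : HasSum (fun n : ℕ => (1 : ℝ) / (n : ℝ) ^ 6) (π ^ 6 / 945) := by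
  have hb : (bernoulli 6 : ℚ) = 1 / 42 := by
    rw [bernoulli_eq_bernoulli'_of_ne_one (by norm_num), my_bernoulli'_six]
  convert hasSum_zeta_nat (k := 3) (by norm_num) using 1
  norm_num [hb, Nat.factorial]
  ring

lemma my_sin_ge (x : ℝ) (hx : 0 ≤ x) : x - x ^ 3 / 6 ≤ Real.sin x := by
  have hd : ∀ y : ℝ, HasDerivAt (fun y : ℝ => Real.sin y - y + y ^ 3 / 6)
      (Real.cos y - 1 + 3 * y ^ 2 / 6) y := by
    intro y
    have h1 := ((Real.hasDerivAt_sin y).sub (hasDerivAt_id y)).add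
      ((hasDerivAt_pow 3 y).div_const 6)
    simp at h1
    exact h1
  have key : MonotoneOn (fun y : ℝ => Real.sin y - y + y ^ 3 / 6) (Set.Ici 0) := by
    apply monotoneOn_of_deriv_nonneg (convex_Ici 0)
    · exact (Continuous.continuousOn (by continuity))
    · intro y _
      exact (hd y).differentiableAt.differentiableWithinAt
    · intro y hy
      rw [(hd y).deriv]
      nlinarith [Real.one_sub_sq_div_two_le_cos (x := y)]
  have h0 := key Set.self_mem_Ici (Set.mem_Ici.mpr hx) hx
  simp only [Real.sin_zero] at h0
  norm_num at h0
  linarith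

/-- For any `N : ℕ` and `t ≥ 0`,
`S₂(t) ≥ −N + A₂(N)·t − B₂(N)·t³` with
`A₂(N) = π²/6 − ∑_{n=1}^N n^{-2}`, `B₂(N) = (1/6)(π⁶/945 − ∑_{n=1}^N n^{-6})`. -/
theorem stmt_19 (N : ℕ) (t : ℝ) (ht : 0 ≤ t) :
    (∑' n : ℕ, Real.sin (t / ((n : ℝ) + 1) ^ 2))
      ≥ -(N : ℝ)
        + (π ^ 2 / 6 - ∑ n ∈ Finset.range N, 1 / ((n : ℝ) + 1) ^ 2) * t
        - (1 / 6) * (π ^ 6 / 945 - ∑ n ∈ Finset.range N, 1 / ((n : ℝ) + 1) ^ 6) * t ^ 3 := by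
  -- summability facts
  have hpos : ∀ n : ℕ, (0 : ℝ) < ((n : ℝ) + 1) := fun n => by positivity
  have hS2 : HasSum (fun n : ℕ => (1 : ℝ) / ((n : ℝ) + 1) ^ 2) (π ^ 2 / 6) := by
    have h := (hasSum_nat_add_iff' (f := fun n : ℕ => (1 : ℝ) / (n : ℝ) ^ 2) 1).mpr
      hasSum_zeta_two
    simp only [Finset.range_one, Finset.sum_singleton, Nat.cast_zero, Nat.cast_add,
      Nat.cast_one] at h
    norm_num at h
    simpa [one_div] using h
  have hS6 : HasSum (fun n : ℕ => (1 : ℝ) / ((n : ℝ) + 1) ^ 6) (π ^ 6 / 945) := by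
    have h := (hasSum_nat_add_iff' (f := fun n : ℕ => (1 : ℝ) / (n : ℝ) ^ 6) 1).mpr
      my_hasSum_zeta_six
    simp only [Finset.range_one, Finset.sum_singleton, Nat.cast_zero, Nat.cast_add,
      Nat.cast_one] at h
    norm_num at h
    simpa [one_div] using h
  have hsum2 : Summable (fun n : ℕ => (1 : ℝ) / ((n : ℝ) + 1) ^ 2) := hS2.summable
  have hsum6 : Summable (fun n : ℕ => (1 : ℝ) / ((n : ℝ) + 1) ^ 6) := hS6.summable
  -- summability of the sin series
  have hf : Summable (fun n : ℕ => Real.sin (t / ((n : ℝ) + 1) ^ 2)) := by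
    have hb : ∀ n : ℕ, |Real.sin (t / ((n : ℝ) + 1) ^ 2)| ≤ t * (1 / ((n : ℝ) + 1) ^ 2) := by
      intro n
      have h1 : |Real.sin (t / ((n : ℝ) + 1) ^ 2)| ≤ |t / ((n : ℝ) + 1) ^ 2| :=
        Real.abs_sin_le_abs
      have h2 : (0 : ℝ) ≤ t / ((n : ℝ) + 1) ^ 2 := by positivity
      rw [abs_of_nonneg h2] at h1
      calc |Real.sin (t / ((n : ℝ) + 1) ^ 2)| ≤ t / ((n : ℝ) + 1) ^ 2 := h1
        _ = t * (1 / ((n : ℝ) + 1) ^ 2) := by ring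
    exact (Summable.of_nonneg_of_le (fun n => abs_nonneg _) hb (hsum2.mul_left t)).of_abs
  -- split the series at N
  have hsplit := (Summable.sum_add_tsum_nat_add (f := fun n : ℕ => Real.sin (t / ((n : ℝ) + 1) ^ 2)) N
    hf).symm
  -- the tail series lower bound function
  set g : ℕ → ℝ := fun n => t * (1 / ((n : ℝ) + (N : ℝ) + 1) ^ 2)
    - t ^ 3 / 6 * (1 / ((n : ℝ) + (N : ℝ) + 1) ^ 6) with hg
  have hgs2 : Summable (fun n : ℕ => (1 : ℝ) / ((n : ℝ) + (N : ℝ) + 1) ^ 2) := by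
    have := (summable_nat_add_iff (f := fun n : ℕ => (1 : ℝ) / ((n : ℝ) + 1) ^ 2) N).mpr hsum2
    exact this.congr (fun n => by simp)
  have hgs6 : Summable (fun n : ℕ => (1 : ℝ) / ((n : ℝ) + (N : ℝ) + 1) ^ 6) := by
    have := (summable_nat_add_iff (f := fun n : ℕ => (1 : ℝ) / ((n : ℝ) + 1) ^ 6) N).mpr hsum6
    exact this.congr (fun n => by simp)
  have hgsum : Summable g := (hgs2.mul_left t).sub (hgs6.mul_left (t ^ 3 / 6))
  -- tail tsum values
  have ht2 : ∑' n : ℕ, (1 : ℝ) / ((n : ℝ) + (N : ℝ) + 1) ^ 2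
      = π ^ 2 / 6 - ∑ n ∈ Finset.range N, 1 / ((n : ℝ) + 1) ^ 2 := by
    have h := Summable.sum_add_tsum_nat_add (f := fun n : ℕ => (1 : ℝ) / ((n : ℝ) + 1) ^ 2) N hsum2
    rw [hS2.tsum_eq] at h
    have he : ∑' n : ℕ, (1 : ℝ) / ((↑(n + N) : ℝ) + 1) ^ 2
        = ∑' n : ℕ, (1 : ℝ) / ((n : ℝ) + (N : ℝ) + 1) ^ 2 := by
      congr 1; ext n; push_cast; ring_nf
    rw [he] at h
    linarith
  have ht6 : ∑' n : ℕ, (1 : ℝ) / ((n : ℝ) + (N : ℝ) + 1) ^ 6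
      = π ^ 6 / 945 - ∑ n ∈ Finset.range N, 1 / ((n : ℝ) + 1) ^ 6 := by
    have h := Summable.sum_add_tsum_nat_add (f := fun n : ℕ => (1 : ℝ) / ((n : ℝ) + 1) ^ 6) N hsum6
    rw [hS6.tsum_eq] at h
    have he : ∑' n : ℕ, (1 : ℝ) / ((↑(n + N) : ℝ) + 1) ^ 6
        = ∑' n : ℕ, (1 : ℝ) / ((n : ℝ) + (N : ℝ) + 1) ^ 6 := by
      congr 1; ext n; push_cast; ring_nf
    rw [he] at h
    linarith
  -- tail comparison
  have htail : ∑' n : ℕ, g n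
      ≤ ∑' n : ℕ, Real.sin (t / ((↑(n + N) : ℝ) + 1) ^ 2) := by
    apply Summable.tsum_le_tsum _ hgsum ((summable_nat_add_iff N).mpr hf)
    intro n
    have hx : (0 : ℝ) ≤ t / ((n : ℝ) + (N : ℝ) + 1) ^ 2 := by positivity
    have hsin := my_sin_ge _ hx
    have hcast : ((↑(n + N) : ℝ) + 1) = (n : ℝ) + (N : ℝ) + 1 := by push_cast; ring
    rw [hcast]
    have hcube : (t / ((n : ℝ) + (N : ℝ) + 1) ^ 2) ^ 3
        = t ^ 3 / ((n : ℝ) + (N : ℝ) + 1) ^ 6 := by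
      rw [div_pow, ← pow_mul]
    calc g n = t / ((n : ℝ) + (N : ℝ) + 1) ^ 2
          - (t / ((n : ℝ) + (N : ℝ) + 1) ^ 2) ^ 3 / 6 := by
          simp only [hg]; rw [hcube]; ring
      _ ≤ Real.sin (t / ((n : ℝ) + (N : ℝ) + 1) ^ 2) := hsin
  -- tail tsum value
  have hgval : ∑' n : ℕ, g n
      = (π ^ 2 / 6 - ∑ n ∈ Finset.range N, 1 / ((n : ℝ) + 1) ^ 2) * t
        - (1 / 6) * (π ^ 6 / 945 - ∑ n ∈ Finset.range N, 1 / ((n : ℝ) + 1) ^ 6) * t ^ 3 := by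
    rw [hg, Summable.tsum_sub (hgs2.mul_left t) (hgs6.mul_left (t ^ 3 / 6)),
      tsum_mul_left, tsum_mul_left, ht2, ht6]
    ring
  -- head lower bound
  have hhead : -(N : ℝ) ≤ ∑ n ∈ Finset.range N, Real.sin (t / ((n : ℝ) + 1) ^ 2) := by
    calc -(N : ℝ) = ∑ _n ∈ Finset.range N, (-1 : ℝ) := by
          simp
      _ ≤ ∑ n ∈ Finset.range N, Real.sin (t / ((n : ℝ) + 1) ^ 2) :=
          Finset.sum_le_sum fun n _ => Real.neg_one_le_sin _
  rw [ge_iff_le, hsplit]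
  have := htail
  rw [hgval] at this
  linarith
end
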